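/- Let c be an admissible coefficient function satisfying (Cubic values). Let γ ∈ ℤ^{μ_A−2} be non-negative with |γ| = 4 and γ − e_{i_1,j_1} − e_{i_2,j_2} ≥ 0 for some (i_1,j_1), (i_2,j_2) with i_1 ≠ i_2. If a_{i_1} ≥ 3, then c(γ,0) = 0. -/

import Mathlib

/- Common framework: Frobenius manifolds for orbifold projective lines ℙ¹_A,
   following Ishibashi–Shiraishi–Takahashi. -/

namespace FrobeniusUniqueness

/-- A point index `(i, j)` labelling a flat coordinate `t_{i,j}`. -/
abbrev Pt : Type := Fin 3 × ℕ

/-- A non-negative element of `ℤ^{μ_A − 2}`: an exponent vector `α` with `α_{i,j} ∈ ℕ`. -/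
abbrev Expv : Type := Pt →₀ ℕ

/-- The standard basis vector `e_{i,j}`. -/
noncomputable def e (i : Fin 3) (j : ℕ) : Expv := Finsupp.single (i, j) 1

/-- The length `|α|` of an exponent vector. -/
def len (α : Expv) : ℕ := α.sum fun _ n => n

/-- A point index `(i,j)` is valid if `1 ≤ j ≤ a_i − 1`. -/
def ValidPt (A : Fin 3 → ℕ) (p : Pt) : Prop := 1 ≤ p.2 ∧ p.2 ≤ A p.1 - 1

/-- An exponent vector lies in `ℤ^{μ_A − 2}` iff it is supported on valid indices. -/
def Valid (A : Fin 3 → ℕ) (α : Expv) : Prop := ∀ p ∈ α.support, ValidPt A p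

/-- The combinatorial factor `s_{a,b,c}`. -/
def sFactor (a b c : ℕ) : ℂ :=
  if a = b ∧ b = c then 6
  else if a ≠ b ∧ b ≠ c ∧ a ≠ c then 1
  else 2

/-- The index type for the flat coordinates `t_1`, `t_{i,j}`, `t_{μ_A}`. -/
inductive Idx : Type where
  | one : Idx
  | pt : Fin 3 → ℕ → Idx
  | mu : Idx
deriving DecidableEq

/-- Validity of a flat coordinate index. -/
def ValidIdx (A : Fin 3 → ℕ) : Idx → Prop
  | .one => True
  | .pt i j => ValidPt A (i, j)
  | .mu => True

/-- The metric `η` in the frame `∂_1, ∂_{i,j}, ∂_{μ_A}`. -/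
noncomputable def eta (A : Fin 3 → ℕ) : Idx → Idx → ℂ
  | .one, .mu => 1
  | .mu, .one => 1
  | .pt i j, .pt i' j' =>
      if i = i' ∧ j + j' = A i ∧ 1 ≤ j ∧ j ≤ A i - 1 then (A i : ℂ)⁻¹ else 0
  | _, _ => 0

/-- The point indices occurring in an `Idx`. -/
def ptsOf : Idx → List Pt
  | .pt i j => [(i, j)]
  | _ => []

/-- The number of occurrences of `μ_A` in an `Idx`. -/
def muCount : Idx → ℕ
  | .mu => 1
  | _ => 0

/-- The factor produced when the monomial `t^{β + Σ_{p ∈ ps} e_p}` is differentiated by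
`∏_{p ∈ ps} ∂_p`, leaving the monomial `t^β`. -/
noncomputable def dfac (β : Expv) : List Pt → ℕ
  | [] => 1
  | p :: ps =>
      ((β + ((ps.map fun q => (Finsupp.single q 1 : Expv)).sum) + Finsupp.single p 1 : Expv) p)
        * dfac β ps

/-- `der A c a b d β m` is the coefficient of `t^β · e^{m·t_{μ_A}}` in `∂_a ∂_b ∂_d F`, where
`F = (1/2)t_1²t_{μ_A} + (1/2)t_1·Σ_{i,j}(1/a_i)t_{i,j}t_{i,a_i−j} + Σ_{α,m} c(α,m)t^α e^{m t_{μ_A}}`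
is the potential of the coefficient function `c`.  In particular `∂_1∂_a∂_b F = η(∂_a,∂_b)`. -/
noncomputable def der (A : Fin 3 → ℕ) (c : Expv → ℕ → ℂ) (a b d : Idx) (β : Expv) (m : ℕ) : ℂ :=
  if a = .one then (if β = 0 ∧ m = 0 then eta A b d else 0)
  else if b = .one then (if β = 0 ∧ m = 0 then eta A a d else 0)
  else if d = .one then (if β = 0 ∧ m = 0 then eta A a b else 0)
  else
    (m : ℂ) ^ (muCount a + muCount b + muCount d) *
      (dfac β (ptsOf a ++ ptsOf b ++ ptsOf d) : ℂ) *
      c (β + (((ptsOf a ++ ptsOf b ++ ptsOf d).map fun q => (Finsupp.single q 1 : Expv)).sum)) m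

/-- The coefficient of `t^β · e^{m·t_{μ_A}}` in
`Σ_{σ,τ} ∂_a∂_b∂_σF · η^{στ} · ∂_τ∂_d∂_e F`, where `(η^{στ})` is the inverse matrix of
`(η_{στ})` (so the only nonzero entries are `η^{1,μ_A} = η^{μ_A,1} = 1` and
`η^{(i,j),(i,a_i−j)} = a_i`). -/
noncomputable def quadTerm (A : Fin 3 → ℕ) (c : Expv → ℕ → ℂ) (a b d e' : Idx)
    (β : Expv) (m : ℕ) : ℂ :=
  ∑ x ∈ Finset.HasAntidiagonal.antidiagonal β, ∑ y ∈ Finset.HasAntidiagonal.antidiagonal m,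
    (der A c a b .one x.1 y.1 * der A c .mu d e' x.2 y.2
     + der A c a b .mu x.1 y.1 * der A c .one d e' x.2 y.2
     + ∑ i : Fin 3, ∑ j ∈ Finset.Icc 1 (A i - 1),
         (A i : ℂ) * der A c a b (.pt i j) x.1 y.1 * der A c (.pt i (A i - j)) d e' x.2 y.2)

/-- `χ_A = 1/a_1 + 1/a_2 + 1/a_3 − 1`. -/
noncomputable def chi (A : Fin 3 → ℕ) : ℚ := (A 0 : ℚ)⁻¹ + (A 1 : ℚ)⁻¹ + (A 2 : ℚ)⁻¹ - 1

/-- The degree of the monomial `t^α`: `Σ_{i,j} α_{i,j}·(a_i − j)/a_i`. -/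
noncomputable def deg (A : Fin 3 → ℕ) (α : Expv) : ℚ :=
  α.sum fun p n => (n : ℚ) * (((A p.1 : ℚ) - (p.2 : ℚ)) / (A p.1 : ℚ))

/-- A coefficient function is admissible if it satisfies (Homogeneity) and the WDVV
equations (coefficientwise, in the variables `t_{i,j}` and `e^{t_{μ_A}}`). -/
structure IsAdmissible (A : Fin 3 → ℕ) (c : Expv → ℕ → ℂ) : Prop where
  homog : ∀ α : Expv, Valid A α → ∀ m : ℕ, c α m ≠ 0 → deg A α + (m : ℚ) * chi A = 2
  wdvv : ∀ a b d e' : Idx, ValidIdx A a → ValidIdx A b → ValidIdx A d → ValidIdx A e' →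
      ∀ β : Expv, Valid A β → ∀ m : ℕ,
        quadTerm A c a b d e' β m = quadTerm A c a d b e' β m

/-- (Cubic values). -/
def CubicValues (A : Fin 3 → ℕ) (c : Expv → ℕ → ℂ) : Prop :=
  (∀ (i₁ i₂ i₃ : Fin 3) (j₁ j₂ j₃ : ℕ),
      ValidPt A (i₁, j₁) → ValidPt A (i₂, j₂) → ValidPt A (i₃, j₃) →
      ¬(i₁ = i₂ ∧ i₂ = i₃) → c (e i₁ j₁ + e i₂ j₂ + e i₃ j₃) 0 = 0) ∧
  (∀ (i : Fin 3) (j₁ j₂ j₃ : ℕ),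
      ValidPt A (i, j₁) → ValidPt A (i, j₂) → ValidPt A (i, j₃) →
      sFactor j₁ j₂ j₃ * c (e i j₁ + e i j₂ + e i j₃) 0 =
        if j₁ + j₂ + j₃ = A i then (A i : ℂ)⁻¹ else 0)

/-- (Normalization). -/
def Normalization (A : Fin 3 → ℕ) (c : Expv → ℕ → ℂ) : Prop :=
  (2 ≤ A 0 → c (e 0 1 + e 1 1 + e 2 1) 1 = 1) ∧
  (A 0 = 1 → A 0 < A 1 → c (e 1 1 + e 2 1) 1 = 1) ∧
  (A 0 = 1 → A 1 = 1 → A 1 < A 2 → c (e 2 1) 1 = 1) ∧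
  (A 0 = 1 → A 1 = 1 → A 2 = 1 → c 0 1 = 1)

/-- (Separation). -/
def Separation (A : Fin 3 → ℕ) (c : Expv → ℕ → ℂ) : Prop :=
  ∀ γ : Expv, Valid A γ →
    ∀ (i₁ i₂ : Fin 3) (j₁ j₂ : ℕ), i₁ ≠ i₂ → ValidPt A (i₁, j₁) → ValidPt A (i₂, j₂) →
      e i₁ j₁ + e i₂ j₂ ≤ γ → c γ 0 = 0

/-- The automorphism of `ℤ^{μ_A−2}` exchanging `e_{i₁,j}` and `e_{i₂,j}` for all `j`. -/
def swapExp (i₁ i₂ : Fin 3) (α : Expv) : Expv :=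
  Finsupp.equivMapDomain ((Equiv.swap i₁ i₂).prodCongr (Equiv.refl ℕ)) α

/-- (Symmetry). -/
def Symmetry (A : Fin 3 → ℕ) (c : Expv → ℕ → ℂ) : Prop :=
  ∀ i₁ i₂ : Fin 3, A i₁ = A i₂ → ∀ α : Expv, Valid A α → ∀ m : ℕ,
    c (swapExp i₁ i₂ α) m = c α m


section Aux

variable {A : Fin 3 → ℕ} {c : Expv → ℕ → ℂ}

lemma len_add (α β : Expv) : len (α + β) = len α + len β := by
  classical
  simp [len, Finsupp.sum_add_index]

lemma len_single (p : Pt) (n : ℕ) : len (Finsupp.single p n) = n := by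
  classical
  simp [len, Finsupp.sum_single_index]

lemma len_eq_zero {α : Expv} (h : len α = 0) : α = 0 := by
  classical
  ext p
  simp only [Finsupp.coe_zero, Pi.zero_apply]
  by_contra hp
  have hmem : p ∈ α.support := Finsupp.mem_support_iff.mpr hp
  have : α p ≤ len α := Finset.single_le_sum (f := fun q => α q) (by intro q _; exact Nat.zero_le _) hmem
  omega

lemma exists_single_le {α : Expv} (h : α ≠ 0) : ∃ p, Finsupp.single p 1 ≤ α := by
  classical
  obtain ⟨p, hp⟩ := Finsupp.ne_iff.mp h
  have hp' : α p ≠ 0 := by simpa using hp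
  refine ⟨p, ?_⟩
  rw [Finsupp.le_def]
  intro q
  rcases eq_or_ne q p with rfl | hq
  · have h1 : (Finsupp.single q 1 : Expv) q = 1 := by simp
    omega
  · have h1 : (Finsupp.single p 1 : Expv) q = 0 := by simp [Finsupp.single_apply, hq.symm]
    simp [h1]

/-- Decomposition of a length-4 vector extending `e i₁ j₁ + e i₂ j₂`. -/
lemma decomp4 {γ : Expv} {P₁ P₂ : Pt}
    (hlen : len γ = 4) (hle : Finsupp.single P₁ 1 + Finsupp.single P₂ 1 ≤ γ) :
    ∃ P₃ P₄ : Pt, γ = Finsupp.single P₁ 1 + Finsupp.single P₂ 1 +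
      Finsupp.single P₃ 1 + Finsupp.single P₄ 1 := by
  classical
  obtain ⟨δ, hδ⟩ := exists_add_of_le hle
  have hlδ : len δ = 2 := by
    have := hlen
    rw [hδ, len_add, len_add, len_single, len_single] at this
    omega
  have hδ0 : δ ≠ 0 := by intro h; rw [h] at hlδ; simp [len] at hlδ
  obtain ⟨P₃, h3⟩ := exists_single_le hδ0
  obtain ⟨δ', hδ'⟩ := exists_add_of_le h3
  have hlδ' : len δ' = 1 := by
    have := hlδ; rw [hδ', len_add, len_single] at this; omega
  have hδ'0 : δ' ≠ 0 := by intro h; rw [h] at hlδ'; simp [len] at hlδ'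
  obtain ⟨P₄, h4⟩ := exists_single_le hδ'0
  obtain ⟨δ'', hδ''⟩ := exists_add_of_le h4
  have : len δ'' = 0 := by
    have := hlδ'; rw [hδ'', len_add, len_single] at this; omega
  have hz := len_eq_zero this
  refine ⟨P₃, P₄, ?_⟩
  rw [hδ, hδ', hδ'', hz]
  abel

/-- Validity of components. -/
lemma validPt_of_le {γ : Expv} (hγ : Valid A γ) {P : Pt}
    (h : ∀ q, (Finsupp.single P 1 : Expv) q ≤ γ q) : ValidPt A P := by
  classical
  apply hγ
  rw [Finsupp.mem_support_iff]
  have h1 := h P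
  simp [Finsupp.single_apply] at h1
  omega

end Aux
section Aux2

variable {A : Fin 3 → ℕ} {c : Expv → ℕ → ℂ}

lemma sum_antidiagonal_single (r : Pt) (f : Expv × Expv → ℂ) :
    ∑ x ∈ Finset.HasAntidiagonal.antidiagonal (Finsupp.single r 1 : Expv), f x =
      f (0, Finsupp.single r 1) + f (Finsupp.single r 1, 0) := by
  classical
  rw [Finsupp.antidiagonal_single, Finset.sum_map]
  have h1 : Finset.HasAntidiagonal.antidiagonal (1 : ℕ) = {(0,1),(1,0)} := rfl
  rw [h1]
  rw [Finset.sum_insert (by decide), Finset.sum_singleton]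
  simp

lemma dfac_pos (β : Expv) (l : List Pt) : 0 < dfac β l := by
  induction l with
  | nil => simp [dfac]
  | cons p ps ih =>
    simp only [dfac]
    apply Nat.mul_pos _ ih
    have : (β + ((ps.map fun q => (Finsupp.single q 1 : Expv)).sum) + Finsupp.single p 1 : Expv) p
        = β p + ((ps.map fun q => (Finsupp.single q 1 : Expv)).sum) p + 1 := by
      simp [Finsupp.add_apply]
    omega

lemma sFactor_ne_zero (a b c' : ℕ) : sFactor a b c' ≠ 0 := by
  unfold sFactor
  split
  · norm_num
  · split <;> norm_num

lemma dfac_triple (i : Fin 3) (u v w : ℕ) :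
    ((dfac 0 [(i,u),(i,v),(i,w)] : ℕ) : ℂ) = sFactor u v w := by
  by_cases h1 : u = v <;> by_cases h2 : v = w <;> by_cases h3 : u = w <;>
    first
      | (exfalso; omega)
      | (simp [dfac, sFactor, Finsupp.add_apply, Finsupp.single_apply, Prod.ext_iff, h1, h2, h3, eq_comm] <;>
          norm_num)
end Aux2
section Aux3

variable {A : Fin 3 → ℕ} {c : Expv → ℕ → ℂ}

lemma core (hcub : CubicValues A c) (P Q R : Pt)
    (hP : ValidPt A P) (hQ : ValidPt A Q) (hR : ValidPt A R) :
    ((dfac 0 [P, Q, R] : ℕ) : ℂ) *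
        c (Finsupp.single P 1 + Finsupp.single Q 1 + Finsupp.single R 1) 0 =
      if P.1 = Q.1 ∧ Q.1 = R.1 ∧ P.2 + Q.2 + R.2 = A P.1 then (A P.1 : ℂ)⁻¹ else 0 := by
  obtain ⟨ip, up⟩ := P
  obtain ⟨iq, uq⟩ := Q
  obtain ⟨ir, ur⟩ := R
  by_cases hg : ip = iq ∧ iq = ir
  · obtain ⟨h1, h2⟩ := hg
    subst h1; subst h2
    have hc := hcub.2 ip up uq ur hP hQ hR
    rw [dfac_triple]
    unfold e at hc
    by_cases hs : up + uq + ur = A ip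
    · rw [if_pos ⟨rfl, rfl, hs⟩]
      rw [if_pos hs] at hc
      have hsf := sFactor_ne_zero up uq ur
      field_simp at hc ⊢
      linear_combination hc
    · rw [if_neg (by simp [hs])]
      rw [if_neg hs] at hc
      rcases mul_eq_zero.mp hc with h | h
      · exact absurd h (sFactor_ne_zero up uq ur)
      · rw [h, mul_zero]
  · have hc := hcub.1 ip iq ir up uq ur hP hQ hR hg
    unfold e at hc
    rw [hc, mul_zero, if_neg (by tauto)]

lemma der_mu_mid (k : Fin 3) (l : ℕ) (u : Fin 3) (v : ℕ) (β : Expv) :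
    der A c .mu (.pt k l) (.pt u v) β 0 = 0 := by
  simp [der, muCount]

lemma der_mu_last (a b : Idx) (β : Expv) (ha : a ≠ .one) (hb : b ≠ .one) :
    der A c a b .mu β 0 = 0 := by
  simp [der, ha, hb, muCount]

lemma der_ppp (i : Fin 3) (j : ℕ) (k : Fin 3) (l : ℕ) (u : Fin 3) (v : ℕ) (β : Expv) :
    der A c (.pt i j) (.pt k l) (.pt u v) β 0 =
      ((dfac β [(i,j),(k,l),(u,v)] : ℕ) : ℂ) *
        c (β + (Finsupp.single (i,j) 1 + (Finsupp.single (k,l) 1 + Finsupp.single (u,v) 1))) 0 := by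
  simp [der, muCount, ptsOf]

end Aux3
section Aux4

variable {A : Fin 3 → ℕ} {c : Expv → ℕ → ℂ}

lemma core' (hcub : CubicValues A c) (P Q R : Pt)
    (hP : ValidPt A P) (hQ : ValidPt A Q) (hR : ValidPt A R) :
    ((dfac 0 [P, Q, R] : ℕ) : ℂ) *
        c (Finsupp.single P 1 + (Finsupp.single Q 1 + Finsupp.single R 1)) 0 =
      if P.1 = Q.1 ∧ Q.1 = R.1 ∧ P.2 + Q.2 + R.2 = A P.1 then (A P.1 : ℂ)⁻¹ else 0 := by
  rw [← add_assoc]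
  exact core hcub P Q R hP hQ hR

lemma cube_last (hcub : CubicValues A c) (g1 g2 i : Fin 3) (n1 n2 j : ℕ)
    (h1 : ValidPt A (g1, n1)) (h2 : ValidPt A (g2, n2))
    (hj : 1 ≤ j) (hj2 : j ≤ A i - 1) :
    (A i : ℂ) * der A c (.pt g1 n1) (.pt g2 n2) (.pt i j) 0 0 =
      if g1 = g2 ∧ g2 = i ∧ n1 + n2 + j = A i then 1 else 0 := by
  have hij : ValidPt A (i, j) := ⟨hj, hj2⟩
  have hAi : 2 ≤ A i := by omega
  rw [der_ppp, zero_add, core' hcub (g1,n1) (g2,n2) (i,j) h1 h2 hij]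
  by_cases hc : g1 = g2 ∧ g2 = i ∧ n1 + n2 + j = A i
  · obtain ⟨ha, hb, hs⟩ := hc
    subst ha; subst hb
    rw [if_pos ⟨rfl, rfl, hs⟩, if_pos ⟨rfl, rfl, hs⟩]
    have : (A g1 : ℂ) ≠ 0 := by
      simp only [ne_eq, Nat.cast_eq_zero]; omega
    field_simp
  · have hne : ¬(g1 = g2 ∧ g2 = i ∧ n1 + n2 + j = A g1) := by
      intro h
      have hAg : A g1 = A i := by rw [h.1, h.2.1]
      exact hc ⟨h.1, h.2.1, by omega⟩
    rw [if_neg hne, if_neg hc, mul_zero]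

lemma cube_first (hcub : CubicValues A c) (g3 g4 i : Fin 3) (n3 n4 j : ℕ)
    (h3 : ValidPt A (g3, n3)) (h4 : ValidPt A (g4, n4))
    (hj : 1 ≤ j) (hj2 : j ≤ A i - 1) :
    (A i : ℂ) * der A c (.pt i (A i - j)) (.pt g3 n3) (.pt g4 n4) 0 0 =
      if i = g3 ∧ g3 = g4 ∧ n3 + n4 = j then 1 else 0 := by
  have hAi : 2 ≤ A i := by omega
  have hvi : ValidPt A (i, A i - j) :=
    ⟨show 1 ≤ A i - j by omega, show A i - j ≤ A i - 1 by omega⟩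
  rw [der_ppp, zero_add, core' hcub (i, A i - j) (g3,n3) (g4,n4) hvi h3 h4]
  simp only [show ((i, A i - j) : Pt).1 = i from rfl, show ((i, A i - j) : Pt).2 = A i - j from rfl,
    show ((g3, n3) : Pt).1 = g3 from rfl, show ((g3, n3) : Pt).2 = n3 from rfl,
    show ((g4, n4) : Pt).1 = g4 from rfl, show ((g4, n4) : Pt).2 = n4 from rfl]
  by_cases hc : i = g3 ∧ g3 = g4 ∧ n3 + n4 = j
  · rw [if_pos ⟨hc.1, hc.2.1, by omega⟩, if_pos hc]
    have : (A i : ℂ) ≠ 0 := by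
      simp only [ne_eq, Nat.cast_eq_zero]; omega
    field_simp
  · rw [if_neg (fun h => hc ⟨h.1, h.2.1, by omega⟩), if_neg hc, mul_zero]

end Aux4
section Aux5

variable {A : Fin 3 → ℕ} {c : Expv → ℕ → ℂ}

lemma sumR (hA : ∀ i, 1 ≤ A i) (hcub : CubicValues A c)
    (g1 g2 g3 g4 : Fin 3) (n1 n2 n3 n4 : ℕ) (r : Pt)
    (h1 : ValidPt A (g1, n1)) (h2 : ValidPt A (g2, n2))
    (h3 : ValidPt A (g3, n3)) (h4 : ValidPt A (g4, n4)) :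
    (∑ i : Fin 3, ∑ j ∈ Finset.Icc 1 (A i - 1),
      (A i : ℂ) * der A c (.pt g1 n1) (.pt g2 n2) (.pt i j) (Finsupp.single r 1) 0 *
        der A c (.pt i (A i - j)) (.pt g3 n3) (.pt g4 n4) 0 0)
    = if g3 = g4 ∧ n3 + n4 < A g3 then
        ((dfac (Finsupp.single r 1) [(g1,n1), (g2,n2), (g3, n3+n4)] : ℕ) : ℂ) *
          c (Finsupp.single r 1 + (Finsupp.single (g1,n1) 1 +
            (Finsupp.single (g2,n2) 1 + Finsupp.single (g3,n3+n4) 1))) 0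
      else 0 := by
  have hstep : ∀ i : Fin 3,
      (∑ j ∈ Finset.Icc 1 (A i - 1),
        (A i : ℂ) * der A c (.pt g1 n1) (.pt g2 n2) (.pt i j) (Finsupp.single r 1) 0 *
          der A c (.pt i (A i - j)) (.pt g3 n3) (.pt g4 n4) 0 0)
      = if i = g3 then
          (if g3 = g4 ∧ n3 + n4 < A g3 then
            ((dfac (Finsupp.single r 1) [(g1,n1), (g2,n2), (g3, n3+n4)] : ℕ) : ℂ) *
              c (Finsupp.single r 1 + (Finsupp.single (g1,n1) 1 +
                (Finsupp.single (g2,n2) 1 + Finsupp.single (g3,n3+n4) 1))) 0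
          else 0)
        else 0 := by
    intro i
    have hterm : ∀ j ∈ Finset.Icc 1 (A i - 1),
        (A i : ℂ) * der A c (.pt g1 n1) (.pt g2 n2) (.pt i j) (Finsupp.single r 1) 0 *
          der A c (.pt i (A i - j)) (.pt g3 n3) (.pt g4 n4) 0 0
        = if j = n3 + n4 ∧ i = g3 ∧ g3 = g4 then
            der A c (.pt g1 n1) (.pt g2 n2) (.pt i j) (Finsupp.single r 1) 0
          else 0 := by
      intro j hj
      rw [Finset.mem_Icc] at hj
      rw [mul_comm (A i : ℂ) _, mul_assoc,
        cube_first hcub g3 g4 i n3 n4 j h3 h4 hj.1 hj.2]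
      by_cases hc : i = g3 ∧ g3 = g4 ∧ n3 + n4 = j
      · rw [if_pos hc, if_pos ⟨hc.2.2.symm, hc.1, hc.2.1⟩, mul_one]
      · rw [if_neg hc, if_neg (by tauto), mul_zero]
    rw [Finset.sum_congr rfl hterm]
    by_cases hig : i = g3 ∧ g3 = g4
    · obtain ⟨rfl, rfl⟩ := hig
      simp only [and_true, true_and, if_true]
      rw [Finset.sum_ite_eq' (Finset.Icc 1 (A i - 1)) (n3 + n4)
        (fun j => der A c (.pt g1 n1) (.pt g2 n2) (.pt i j) (Finsupp.single r 1) 0)]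
      have hn3 : 1 ≤ n3 := h3.1
      by_cases hlt : n3 + n4 < A i
      · rw [if_pos (Finset.mem_Icc.mpr ⟨by omega, by omega⟩), if_pos hlt, der_ppp]
      · rw [if_neg (by rw [Finset.mem_Icc]; omega), if_neg hlt]
    · rw [Finset.sum_eq_zero, eq_comm]
      · by_cases hi3 : i = g3
        · rw [if_pos hi3, if_neg (by tauto)]
        · rw [if_neg hi3]
      · intro j hj
        rw [if_neg (by tauto)]
  rw [Finset.sum_congr rfl (fun i _ => hstep i)]
  rw [Finset.sum_ite_eq' Finset.univ g3]
  rw [if_pos (Finset.mem_univ g3)]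

end Aux5
section Aux6

variable {A : Fin 3 → ℕ} {c : Expv → ℕ → ℂ}

lemma sumL (hA : ∀ i, 1 ≤ A i) (hcub : CubicValues A c)
    (g1 g2 g3 g4 : Fin 3) (n1 n2 n3 n4 : ℕ) (r : Pt)
    (h1 : ValidPt A (g1, n1)) (h2 : ValidPt A (g2, n2))
    (h3 : ValidPt A (g3, n3)) (h4 : ValidPt A (g4, n4)) :
    (∑ i : Fin 3, ∑ j ∈ Finset.Icc 1 (A i - 1),
      (A i : ℂ) * der A c (.pt g1 n1) (.pt g2 n2) (.pt i j) 0 0 *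
        der A c (.pt i (A i - j)) (.pt g3 n3) (.pt g4 n4) (Finsupp.single r 1) 0)
    = if g1 = g2 ∧ n1 + n2 < A g1 then
        ((dfac (Finsupp.single r 1) [(g1, n1+n2), (g3,n3), (g4,n4)] : ℕ) : ℂ) *
          c (Finsupp.single r 1 + (Finsupp.single (g1,n1+n2) 1 +
            (Finsupp.single (g3,n3) 1 + Finsupp.single (g4,n4) 1))) 0
      else 0 := by
  have hstep : ∀ i : Fin 3,
      (∑ j ∈ Finset.Icc 1 (A i - 1),
        (A i : ℂ) * der A c (.pt g1 n1) (.pt g2 n2) (.pt i j) 0 0 *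
          der A c (.pt i (A i - j)) (.pt g3 n3) (.pt g4 n4) (Finsupp.single r 1) 0)
      = if i = g2 then
          (if g1 = g2 ∧ n1 + n2 < A g1 then
            ((dfac (Finsupp.single r 1) [(g1, n1+n2), (g3,n3), (g4,n4)] : ℕ) : ℂ) *
              c (Finsupp.single r 1 + (Finsupp.single (g1,n1+n2) 1 +
                (Finsupp.single (g3,n3) 1 + Finsupp.single (g4,n4) 1))) 0
          else 0)
        else 0 := by
    intro i
    have hterm : ∀ j ∈ Finset.Icc 1 (A i - 1),
        (A i : ℂ) * der A c (.pt g1 n1) (.pt g2 n2) (.pt i j) 0 0 *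
          der A c (.pt i (A i - j)) (.pt g3 n3) (.pt g4 n4) (Finsupp.single r 1) 0
        = if j = A i - (n1 + n2) ∧ n1 + n2 < A i ∧ g1 = g2 ∧ g2 = i then
            der A c (.pt i (A i - j)) (.pt g3 n3) (.pt g4 n4) (Finsupp.single r 1) 0
          else 0 := by
      intro j hj
      rw [Finset.mem_Icc] at hj
      rw [cube_last hcub g1 g2 i n1 n2 j h1 h2 hj.1 hj.2]
      by_cases hc : g1 = g2 ∧ g2 = i ∧ n1 + n2 + j = A i
      · rw [if_pos hc, if_pos ⟨by omega, by omega, hc.1, hc.2.1⟩, one_mul]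
      · rw [if_neg hc, if_neg (fun h => hc ⟨h.2.2.1, h.2.2.2, by omega⟩), zero_mul]
    rw [Finset.sum_congr rfl hterm]
    by_cases hig : g1 = g2 ∧ g2 = i
    · obtain ⟨rfl, rfl⟩ := hig
      by_cases hlt : n1 + n2 < A g1
      · have hn1 : 1 ≤ n1 := h1.1
        have htr : ∀ j ∈ Finset.Icc 1 (A g1 - 1),
            (if j = A g1 - (n1 + n2) ∧ n1 + n2 < A g1 ∧ g1 = g1 ∧ g1 = g1 then
              der A c (.pt g1 (A g1 - j)) (.pt g3 n3) (.pt g4 n4) (Finsupp.single r 1) 0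
            else 0)
            = if j = A g1 - (n1 + n2) then
              der A c (.pt g1 (A g1 - j)) (.pt g3 n3) (.pt g4 n4) (Finsupp.single r 1) 0
            else 0 := by
          intro j _
          by_cases hjj : j = A g1 - (n1 + n2)
          · rw [if_pos ⟨hjj, hlt, rfl, rfl⟩, if_pos hjj]
          · rw [if_neg (by tauto), if_neg hjj]
        rw [Finset.sum_congr rfl htr]
        rw [Finset.sum_ite_eq' (Finset.Icc 1 (A g1 - 1)) (A g1 - (n1 + n2))
          (fun j => der A c (.pt g1 (A g1 - j)) (.pt g3 n3) (.pt g4 n4) (Finsupp.single r 1) 0)]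
        rw [if_pos (Finset.mem_Icc.mpr ⟨by omega, by omega⟩), if_pos rfl, if_pos ⟨rfl, hlt⟩]
        rw [show A g1 - (A g1 - (n1 + n2)) = n1 + n2 by omega, der_ppp]
      · rw [Finset.sum_eq_zero (fun j _ => if_neg (fun h => hlt h.2.1)),
          if_pos rfl, if_neg (fun h => hlt h.2), eq_comm]
    · rw [Finset.sum_eq_zero (fun j _ => if_neg (fun h => hig ⟨h.2.2.1, h.2.2.2⟩)), eq_comm]
      by_cases hi2 : i = g2
      · rw [if_pos hi2, if_neg (fun h => hig ⟨h.1, hi2.symm⟩)]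
      · rw [if_neg hi2]
  rw [Finset.sum_congr rfl (fun i _ => hstep i)]
  rw [Finset.sum_ite_eq' Finset.univ g2]
  rw [if_pos (Finset.mem_univ g2)]

end Aux6
section Aux7

variable {A : Fin 3 → ℕ} {c : Expv → ℕ → ℂ}

lemma der_mu_last_pp (i : Fin 3) (j : ℕ) (k : Fin 3) (l : ℕ) (β : Expv) :
    der A c (.pt i j) (.pt k l) .mu β 0 = 0 :=
  der_mu_last _ _ _ (by simp) (by simp)

lemma QT (hA : ∀ i, 1 ≤ A i) (hcub : CubicValues A c)
    (g1 g2 g3 g4 : Fin 3) (n1 n2 n3 n4 : ℕ) (r : Pt)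
    (h1 : ValidPt A (g1, n1)) (h2 : ValidPt A (g2, n2))
    (h3 : ValidPt A (g3, n3)) (h4 : ValidPt A (g4, n4)) :
    quadTerm A c (.pt g1 n1) (.pt g2 n2) (.pt g3 n3) (.pt g4 n4) (Finsupp.single r 1) 0
    = (if g3 = g4 ∧ n3 + n4 < A g3 then
        ((dfac (Finsupp.single r 1) [(g1,n1), (g2,n2), (g3, n3+n4)] : ℕ) : ℂ) *
          c (Finsupp.single r 1 + (Finsupp.single (g1,n1) 1 +
            (Finsupp.single (g2,n2) 1 + Finsupp.single (g3,n3+n4) 1))) 0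
      else 0)
      + (if g1 = g2 ∧ n1 + n2 < A g1 then
        ((dfac (Finsupp.single r 1) [(g1, n1+n2), (g3,n3), (g4,n4)] : ℕ) : ℂ) *
          c (Finsupp.single r 1 + (Finsupp.single (g1,n1+n2) 1 +
            (Finsupp.single (g3,n3) 1 + Finsupp.single (g4,n4) 1))) 0
      else 0) := by
  unfold quadTerm
  rw [sum_antidiagonal_single]
  simp only [Finset.HasAntidiagonal.antidiagonal_zero, Finset.sum_singleton]
  simp only [der_mu_mid, der_mu_last_pp, mul_zero, zero_mul, zero_add, add_zero]
  rw [sumL hA hcub g1 g2 g3 g4 n1 n2 n3 n4 r h1 h2 h3 h4,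
    sumR hA hcub g1 g2 g3 g4 n1 n2 n3 n4 r h1 h2 h3 h4]
  exact add_comm _ _

end Aux7
section Aux8

variable {A : Fin 3 → ℕ} {c : Expv → ℕ → ℂ}

lemma valid_single {r : Pt} (hr : ValidPt A r) : Valid A (Finsupp.single r 1) := by
  intro p hp
  rw [Finsupp.support_single_ne_zero _ one_ne_zero, Finset.mem_singleton] at hp
  subst hp; exact hr

lemma dfac_ne_zero (β : Expv) (l : List Pt) : ((dfac β l : ℕ) : ℂ) ≠ 0 := by
  simp only [ne_eq, Nat.cast_eq_zero]
  have := dfac_pos β l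
  omega

lemma master (hA : ∀ i, 1 ≤ A i) (hadm : IsAdmissible A c) (hcub : CubicValues A c)
    (r p q D E : Pt)
    (hr : ValidPt A r) (hp : ValidPt A p) (hq : ValidPt A q)
    (hD : ValidPt A D) (hE : ValidPt A E)
    (hDE : D.1 = E.1) (hDEs : D.2 + E.2 < A D.1)
    (h2 : p.1 = q.1 → p.2 + q.2 < A p.1 →
      c (Finsupp.single r 1 + (Finsupp.single (p.1, p.2+q.2) 1 +
        (Finsupp.single D 1 + Finsupp.single E 1))) 0 = 0)
    (h3 : q.1 = E.1 → q.2 + E.2 < A q.1 →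
      c (Finsupp.single r 1 + (Finsupp.single p 1 +
        (Finsupp.single D 1 + Finsupp.single (q.1, q.2+E.2) 1))) 0 = 0)
    (h4 : p.1 = D.1 → p.2 + D.2 < A p.1 →
      c (Finsupp.single r 1 + (Finsupp.single (p.1, p.2+D.2) 1 +
        (Finsupp.single q 1 + Finsupp.single E 1))) 0 = 0) :
    c (Finsupp.single r 1 + (Finsupp.single p 1 +
      (Finsupp.single q 1 + Finsupp.single (D.1, D.2+E.2) 1))) 0 = 0 := by
  obtain ⟨gp, np⟩ := p
  obtain ⟨gq, nq⟩ := q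
  obtain ⟨gD, nD⟩ := D
  obtain ⟨gE, nE⟩ := E
  have hw := hadm.wdvv (.pt gp np) (.pt gq nq) (.pt gD nD) (.pt gE nE)
    hp hq hD hE (Finsupp.single r 1) (valid_single hr) 0
  rw [QT hA hcub gp gq gD gE np nq nD nE r hp hq hD hE,
    QT hA hcub gp gD gq gE np nD nq nE r hp hD hq hE] at hw
  rw [if_pos ⟨hDE, hDEs⟩] at hw
  have e2 : (if gp = gq ∧ np + nq < A gp then
      ((dfac (Finsupp.single r 1) [(gp, np+nq), (gD,nD), (gE,nE)] : ℕ) : ℂ) *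
        c (Finsupp.single r 1 + (Finsupp.single (gp,np+nq) 1 +
          (Finsupp.single (gD,nD) 1 + Finsupp.single (gE,nE) 1))) 0
    else 0) = 0 := by
    split_ifs with h
    · rw [h2 h.1 h.2, mul_zero]
    · rfl
  have e3 : (if gq = gE ∧ nq + nE < A gq then
      ((dfac (Finsupp.single r 1) [(gp,np), (gD,nD), (gq, nq+nE)] : ℕ) : ℂ) *
        c (Finsupp.single r 1 + (Finsupp.single (gp,np) 1 +
          (Finsupp.single (gD,nD) 1 + Finsupp.single (gq,nq+nE) 1))) 0
    else 0) = 0 := by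
    split_ifs with h
    · rw [h3 h.1 h.2, mul_zero]
    · rfl
  have e4 : (if gp = gD ∧ np + nD < A gp then
      ((dfac (Finsupp.single r 1) [(gp, np+nD), (gq,nq), (gE,nE)] : ℕ) : ℂ) *
        c (Finsupp.single r 1 + (Finsupp.single (gp,np+nD) 1 +
          (Finsupp.single (gq,nq) 1 + Finsupp.single (gE,nE) 1))) 0
    else 0) = 0 := by
    split_ifs with h
    · rw [h4 h.1 h.2, mul_zero]
    · rfl
  rw [e2, e3, e4, add_zero, zero_add] at hw
  rcases mul_eq_zero.mp hw with h | h
  · exact absurd h (dfac_ne_zero _ _)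
  · exact h

end Aux8
section Aux9

variable {A : Fin 3 → ℕ} {c : Expv → ℕ → ℂ}

lemma killA (hA : ∀ i, 1 ≤ A i) (hadm : IsAdmissible A c) (hcub : CubicValues A c)
    (r : Pt) (gp gq gw : Fin 3) (np nq nw : ℕ)
    (hr : ValidPt A r) (hp : ValidPt A (gp,np)) (hq : ValidPt A (gq,nq))
    (hw : ValidPt A (gw,nw)) (hw2 : 2 ≤ nw)
    (hpw : gp ≠ gw) (hqw : gq ≠ gw) (hpq : gp = gq → A gp ≤ np + nq) :
    c (Finsupp.single r 1 + (Finsupp.single (gp,np) 1 +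
      (Finsupp.single (gq,nq) 1 + Finsupp.single (gw,nw) 1))) 0 = 0 := by
  have hw1 : 1 ≤ nw := hw.1
  have hw2' : nw ≤ A gw - 1 := hw.2
  have H := master hA hadm hcub r (gp,np) (gq,nq) (gw,1) (gw,nw-1) hr hp hq
    ⟨le_refl 1, show (1:ℕ) ≤ A gw - 1 by omega⟩
    ⟨show 1 ≤ nw - 1 by omega, show nw - 1 ≤ A gw - 1 by omega⟩ rfl
    (show 1 + (nw - 1) < A gw by omega)
    (fun h1 h2' => absurd h2' (not_lt.mpr (hpq h1)))
    (fun h _ => absurd h hqw)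
    (fun h _ => absurd h hpw)
  simp only [show ((gw,(1:ℕ)) : Pt).1 = gw from rfl, show ((gw,(1:ℕ)) : Pt).2 = 1 from rfl,
    show ((gw,nw-1) : Pt).2 = nw - 1 from rfl] at H
  rwa [show 1 + (nw - 1) = nw by omega] at H

lemma kill2 (hA : ∀ i, 1 ≤ A i) (hadm : IsAdmissible A c) (hcub : CubicValues A c)
    (r : Pt) (gp gw : Fin 3) (np nq nw : ℕ)
    (hr : ValidPt A r) (hp : ValidPt A (gp,np)) (hq : ValidPt A (gw,nq))
    (hw : ValidPt A (gw,nw)) (hpw : gp ≠ gw) (hsum : A gw < nw + nq) :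
    c (Finsupp.single r 1 + (Finsupp.single (gp,np) 1 +
      (Finsupp.single (gw,nq) 1 + Finsupp.single (gw,nw) 1))) 0 = 0 := by
  have hw1 : 1 ≤ nw := hw.1
  have hw2' : nw ≤ A gw - 1 := hw.2
  have hq1 : 1 ≤ nq := hq.1
  have hq2 : nq ≤ A gw - 1 := hq.2
  have hA1 : 1 ≤ A gw := hA gw
  set t := nw + nq - A gw with ht
  have H := master hA hadm hcub r (gp,np) (gw,nq) (gw,t) (gw,nw-t) hr hp hq
    ⟨show 1 ≤ t by omega, show t ≤ A gw - 1 by omega⟩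
    ⟨show 1 ≤ nw - t by omega, show nw - t ≤ A gw - 1 by omega⟩ rfl
    (show t + (nw - t) < A gw by omega)
    (fun h _ => absurd h hpw)
    (fun _ h => absurd h (show ¬(nq + (nw - t) < A gw) by omega))
    (fun h _ => absurd h hpw)
  simp only [show ((gw,t) : Pt).1 = gw from rfl, show ((gw,t) : Pt).2 = t from rfl,
    show ((gw,nw-t) : Pt).2 = nw - t from rfl] at H
  rwa [show t + (nw - t) = nw by omega] at H

lemma fuse_red (hA : ∀ i, 1 ≤ A i) (hadm : IsAdmissible A c) (hcub : CubicValues A c)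
    (r : Pt) (gh gw : Fin 3) (np nq nw : ℕ)
    (hr : ValidPt A r) (hp : ValidPt A (gh,np)) (hq : ValidPt A (gh,nq))
    (hw : ValidPt A (gw,nw)) (hw2 : 2 ≤ nw) (hhw : gh ≠ gw)
    (hprev : c (Finsupp.single r 1 + (Finsupp.single (gh,np+nq) 1 +
      (Finsupp.single (gw,1) 1 + Finsupp.single (gw,nw-1) 1))) 0 = 0) :
    c (Finsupp.single r 1 + (Finsupp.single (gh,np) 1 +
      (Finsupp.single (gh,nq) 1 + Finsupp.single (gw,nw) 1))) 0 = 0 := by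
  have hw1 : 1 ≤ nw := hw.1
  have hw2' : nw ≤ A gw - 1 := hw.2
  have H := master hA hadm hcub r (gh,np) (gh,nq) (gw,1) (gw,nw-1) hr hp hq
    ⟨le_refl 1, show (1:ℕ) ≤ A gw - 1 by omega⟩
    ⟨show 1 ≤ nw - 1 by omega, show nw - 1 ≤ A gw - 1 by omega⟩ rfl
    (show 1 + (nw - 1) < A gw by omega)
    (fun _ _ => hprev)
    (fun h _ => absurd h hhw)
    (fun h _ => absurd h hhw)
  simp only [show ((gw,(1:ℕ)) : Pt).1 = gw from rfl, show ((gw,(1:ℕ)) : Pt).2 = 1 from rfl,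
    show ((gw,nw-1) : Pt).2 = nw - 1 from rfl] at H
  rwa [show 1 + (nw - 1) = nw by omega] at H

lemma trans_red (hA : ∀ i, 1 ≤ A i) (hadm : IsAdmissible A c) (hcub : CubicValues A c)
    (r : Pt) (gp gw : Fin 3) (np nq nw t : ℕ)
    (hr : ValidPt A r) (hp : ValidPt A (gp,np)) (hq : ValidPt A (gw,nq))
    (hw : ValidPt A (gw,nw)) (hpw : gp ≠ gw)
    (ht1 : 1 ≤ t) (htw : t < nw) (hsum : nq + (nw - t) < A gw)
    (hprev : c (Finsupp.single r 1 + (Finsupp.single (gp,np) 1 +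
      (Finsupp.single (gw,t) 1 + Finsupp.single (gw, nq + (nw - t)) 1))) 0 = 0) :
    c (Finsupp.single r 1 + (Finsupp.single (gp,np) 1 +
      (Finsupp.single (gw,nq) 1 + Finsupp.single (gw,nw) 1))) 0 = 0 := by
  have hw1 : 1 ≤ nw := hw.1
  have hw2' : nw ≤ A gw - 1 := hw.2
  have H := master hA hadm hcub r (gp,np) (gw,nq) (gw,t) (gw,nw-t) hr hp hq
    ⟨show 1 ≤ t by omega, show t ≤ A gw - 1 by omega⟩
    ⟨show 1 ≤ nw - t by omega, show nw - t ≤ A gw - 1 by omega⟩ rfl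
    (show t + (nw - t) < A gw by omega)
    (fun h _ => absurd h hpw)
    (fun _ _ => hprev)
    (fun h _ => absurd h hpw)
  simp only [show ((gw,t) : Pt).1 = gw from rfl, show ((gw,t) : Pt).2 = t from rfl,
    show ((gw,nw-t) : Pt).2 = nw - t from rfl] at H
  rwa [show t + (nw - t) = nw by omega] at H

end Aux9
section Aux10

variable {A : Fin 3 → ℕ} {c : Expv → ℕ → ℂ}

lemma ccongr {γ γ' : Expv} (h : γ = γ') (h0 : c γ' 0 = 0) : c γ 0 = 0 := by
  rw [h]; exact h0

lemma S2 (hA : ∀ i, 1 ≤ A i) (hadm : IsAdmissible A c) (hcub : CubicValues A c)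
    (x y : Fin 3) (hxy : x ≠ y) (hax : 3 ≤ A x)
    (u₁ u₂ v₁ v₂ : ℕ)
    (hu₁ : ValidPt A (x,u₁)) (hu₂ : ValidPt A (x,u₂))
    (hv₁ : ValidPt A (y,v₁)) (hv₂ : ValidPt A (y,v₂))
    (hdeg : (u₁ + u₂) * A y + (v₁ + v₂) * A x = 2 * (A x * A y)) :
    c (Finsupp.single (x,u₁) 1 + (Finsupp.single (x,u₂) 1 +
      (Finsupp.single (y,v₁) 1 + Finsupp.single (y,v₂) 1))) 0 = 0 := by
  have hv1a : 1 ≤ v₁ := hv₁.1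
  have hv1b : v₁ ≤ A y - 1 := hv₁.2
  have hv2a : 1 ≤ v₂ := hv₂.1
  have hv2b : v₂ ≤ A y - 1 := hv₂.2
  have hu1a : 1 ≤ u₁ := hu₁.1
  have hu1b : u₁ ≤ A x - 1 := hu₁.2
  have hu2a : 1 ≤ u₂ := hu₂.1
  have hu2b : u₂ ≤ A x - 1 := hu₂.2
  have hby : 2 ≤ A y := by omega
  by_cases h1 : A x + 1 ≤ u₁ + u₂
  · exact ccongr (by abel)
      (kill2 hA hadm hcub (y,v₁) y x v₂ u₁ u₂ hv₁ hv₂ hu₁ hu₂ (Ne.symm hxy) (by omega))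
  · by_cases h2 : A y + 1 ≤ v₁ + v₂
    · exact ccongr (by abel)
        (kill2 hA hadm hcub (x,u₁) x y u₂ v₁ v₂ hu₁ hu₂ hv₁ hv₂ hxy (by omega))
    · have e1 : u₁ + u₂ = A x ∧ v₁ + v₂ = A y := by
        have h3 : (u₁+u₂) * A y ≤ A x * A y := Nat.mul_le_mul_right _ (by omega)
        have h4 : (v₁+v₂) * A x ≤ A y * A x := Nat.mul_le_mul_right _ (by omega)
        have h5 : A y * A x = A x * A y := Nat.mul_comm _ _
        have e1a : (u₁+u₂) * A y = A x * A y := by linarith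
        have e1b : (v₁+v₂) * A x = A y * A x := by linarith
        constructor
        · exact Nat.eq_of_mul_eq_mul_right (by omega) e1a
        · exact Nat.eq_of_mul_eq_mul_right (by omega) e1b
      rcases le_total u₁ u₂ with h12 | h12
      · exact ccongr (by abel)
          (killA hA hadm hcub (x,u₁) y y x v₁ v₂ u₂ hu₁ hv₁ hv₂ hu₂ (by omega)
            (Ne.symm hxy) (Ne.symm hxy) (fun _ => by omega))
      · exact ccongr (by abel)
          (killA hA hadm hcub (x,u₂) y y x v₁ v₂ u₁ hu₂ hv₁ hv₂ hu₁ (by omega)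
            (Ne.symm hxy) (Ne.symm hxy) (fun _ => by omega))

end Aux10
section Aux11

variable {A : Fin 3 → ℕ} {c : Expv → ℕ → ℂ}

lemma S3sorted (hA : ∀ i, 1 ≤ A i) (hadm : IsAdmissible A c) (hcub : CubicValues A c)
    (x y : Fin 3) (hxy : x ≠ y) (hax : 3 ≤ A x)
    (u₁ u₂ u₃ v : ℕ) (h12 : u₁ ≤ u₂) (h23 : u₂ ≤ u₃)
    (hu₁ : ValidPt A (x,u₁)) (hu₂ : ValidPt A (x,u₂)) (hu₃ : ValidPt A (x,u₃))
    (hv : ValidPt A (y,v))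
    (hdeg : (u₁ + u₂ + u₃) * A y + v * A x = 2 * (A x * A y)) :
    c (Finsupp.single (x,u₁) 1 + (Finsupp.single (x,u₂) 1 +
      (Finsupp.single (x,u₃) 1 + Finsupp.single (y,v) 1))) 0 = 0 := by
  have hva : 1 ≤ v := hv.1
  have hvb : v ≤ A y - 1 := hv.2
  have hu1a : 1 ≤ u₁ := hu₁.1
  have hu1b : u₁ ≤ A x - 1 := hu₁.2
  have hu2a : 1 ≤ u₂ := hu₂.1
  have hu2b : u₂ ≤ A x - 1 := hu₂.2
  have hu3a : 1 ≤ u₃ := hu₃.1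
  have hu3b : u₃ ≤ A x - 1 := hu₃.2
  have hby : 2 ≤ A y := by omega
  by_cases hp23 : A x + 1 ≤ u₂ + u₃
  · exact ccongr (by abel)
      (kill2 hA hadm hcub (x,u₁) y x v u₂ u₃ hu₁ hv hu₂ hu₃ (Ne.symm hxy) (by omega))
  · by_cases hv2 : 2 ≤ v
    · by_cases hf : u₂ + u₃ < A x
      · -- fuse u₂,u₃ and split v; reduce to S2
        have hdeg' : (u₁ + (u₂ + u₃)) * A y + (1 + (v - 1)) * A x = 2 * (A x * A y) := by
          rw [show u₁ + (u₂ + u₃) = u₁ + u₂ + u₃ by omega, show 1 + (v - 1) = v by omega]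
          exact hdeg
        have hS2 := S2 hA hadm hcub x y hxy hax u₁ (u₂+u₃) 1 (v-1)
          hu₁ ⟨show 1 ≤ u₂+u₃ by omega, show u₂+u₃ ≤ A x - 1 by omega⟩
          ⟨le_refl 1, show (1:ℕ) ≤ A y - 1 by omega⟩
          ⟨show 1 ≤ v-1 by omega, show v-1 ≤ A y - 1 by omega⟩ hdeg'
        exact fuse_red hA hadm hcub (x,u₁) x y u₂ u₃ v hu₁ hu₂ hu₃ hv hv2 hxy
          (ccongr (by abel) hS2)
      · -- u₂+u₃ = A x : kill
        exact ccongr (by abel)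
          (killA hA hadm hcub (x,u₁) x x y u₂ u₃ v hu₁ hu₂ hu₃ hv hv2 hxy hxy
            (fun _ => by omega))
    · -- v = 1 : the symmetric case A y = 2, u's all equal
      have hv1 : v = 1 := by omega
      subst hv1
      have h2U : 2 * (u₁ + u₂ + u₃) ≤ 3 * A x := by omega
      have hmul : 2 * (u₁ + u₂ + u₃) * A y ≤ 3 * A x * A y :=
        Nat.mul_le_mul_right _ h2U
      have hb1 : 2 * (u₁ + u₂ + u₃) * A y = 2 * ((u₁ + u₂ + u₃) * A y) := by ring
      have hb2 : 3 * A x * A y = 3 * (A x * A y) := by ring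
      have hble : A x * A y ≤ A x * 2 := by
        have : A x * A y ≤ 2 * A x := by linarith
        linarith [Nat.mul_comm (A x) 2]
      have hb2' : A y ≤ 2 := Nat.le_of_mul_le_mul_left hble (by omega)
      have hy2 : A y = 2 := by omega
      rw [hy2] at hdeg
      -- now: (u₁+u₂+u₃)*2 + A x = 4*A x, all pairs ≤ A x
      have heq : u₁ = u₂ ∧ u₂ = u₃ ∧ A x = 2 * u₁ ∧ 2 ≤ u₁ := by omega
      obtain ⟨e12, e23, hax2, hu12⟩ := heq
      -- transport then kill
      have hkill := kill2 hA hadm hcub (x,1) y x 1 u₁ (u₂ + (u₃ - 1))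
        ⟨le_refl 1, show (1:ℕ) ≤ A x - 1 by omega⟩
        ⟨le_refl 1, show (1:ℕ) ≤ A y - 1 by omega⟩ hu₁
        ⟨show 1 ≤ u₂ + (u₃-1) by omega, show u₂ + (u₃-1) ≤ A x - 1 by omega⟩
        (Ne.symm hxy) (show A x < (u₂ + (u₃-1)) + u₁ by omega)
      have htrans := trans_red hA hadm hcub (x,u₁) y x 1 u₂ u₃ 1
        hu₁ ⟨le_refl 1, show (1:ℕ) ≤ A y - 1 by omega⟩ hu₂ hu₃ (Ne.symm hxy) (le_refl 1)
        (show 1 < u₃ by omega) (show u₂ + (u₃ - 1) < A x by omega)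
        (ccongr (by abel) hkill)
      exact ccongr (by abel) htrans
  
lemma S3 (hA : ∀ i, 1 ≤ A i) (hadm : IsAdmissible A c) (hcub : CubicValues A c)
    (x y : Fin 3) (hxy : x ≠ y) (hax : 3 ≤ A x)
    (u₁ u₂ u₃ v : ℕ)
    (hu₁ : ValidPt A (x,u₁)) (hu₂ : ValidPt A (x,u₂)) (hu₃ : ValidPt A (x,u₃))
    (hv : ValidPt A (y,v))
    (hdeg : (u₁ + u₂ + u₃) * A y + v * A x = 2 * (A x * A y)) :
    c (Finsupp.single (x,u₁) 1 + (Finsupp.single (x,u₂) 1 +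
      (Finsupp.single (x,u₃) 1 + Finsupp.single (y,v) 1))) 0 = 0 := by
  have key : ∀ w₁ w₂ w₃ : ℕ, w₁ ≤ w₂ → w₂ ≤ w₃ →
      ValidPt A (x,w₁) → ValidPt A (x,w₂) → ValidPt A (x,w₃) →
      w₁ + w₂ + w₃ = u₁ + u₂ + u₃ →
      c (Finsupp.single (x,w₁) 1 + (Finsupp.single (x,w₂) 1 +
        (Finsupp.single (x,w₃) 1 + Finsupp.single (y,v) 1))) 0 = 0 := by
    intro w₁ w₂ w₃ a b c1 c2 c3 hsum
    exact S3sorted hA hadm hcub x y hxy hax w₁ w₂ w₃ v a b c1 c2 c3 hv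
      (by rw [hsum]; exact hdeg)
  rcases le_total u₁ u₂ with h12 | h12 <;> rcases le_total u₁ u₃ with h13 | h13 <;>
    rcases le_total u₂ u₃ with h23 | h23
  · exact ccongr (by abel) (key u₁ u₂ u₃ h12 h23 hu₁ hu₂ hu₃ (by omega))
  · exact ccongr (by abel) (key u₁ u₃ u₂ h13 h23 hu₁ hu₃ hu₂ (by omega))
  · exact ccongr (by abel) (key u₃ u₁ u₂ h13 h12 hu₃ hu₁ hu₂ (by omega))
  · exact ccongr (by abel) (key u₃ u₁ u₂ h13 h12 hu₃ hu₁ hu₂ (by omega))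
  · exact ccongr (by abel) (key u₂ u₁ u₃ h12 h13 hu₂ hu₁ hu₃ (by omega))
  · exact ccongr (by abel) (key u₂ u₁ u₃ h12 h13 hu₂ hu₁ hu₃ (by omega))
  · exact ccongr (by abel) (key u₂ u₃ u₁ h23 h13 hu₂ hu₃ hu₁ (by omega))
  · exact ccongr (by abel) (key u₃ u₂ u₁ h23 h12 hu₃ hu₂ hu₁ (by omega))

end Aux11
section Aux12

variable {A : Fin 3 → ℕ} {c : Expv → ℕ → ℂ}

lemma S1sorted (hA : ∀ i, 1 ≤ A i) (hadm : IsAdmissible A c) (hcub : CubicValues A c)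
    (x y : Fin 3) (hxy : x ≠ y) (hax : 3 ≤ A x)
    (u v₁ v₂ v₃ : ℕ) (h12 : v₁ ≤ v₂) (h23 : v₂ ≤ v₃)
    (hu : ValidPt A (x,u))
    (hv₁ : ValidPt A (y,v₁)) (hv₂ : ValidPt A (y,v₂)) (hv₃ : ValidPt A (y,v₃))
    (hdeg : u * A y + (v₁ + v₂ + v₃) * A x = 2 * (A x * A y)) :
    c (Finsupp.single (x,u) 1 + (Finsupp.single (y,v₁) 1 +
      (Finsupp.single (y,v₂) 1 + Finsupp.single (y,v₃) 1))) 0 = 0 := by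
  have hua : 1 ≤ u := hu.1
  have hub : u ≤ A x - 1 := hu.2
  have hv1a : 1 ≤ v₁ := hv₁.1
  have hv1b : v₁ ≤ A y - 1 := hv₁.2
  have hv2a : 1 ≤ v₂ := hv₂.1
  have hv2b : v₂ ≤ A y - 1 := hv₂.2
  have hv3a : 1 ≤ v₃ := hv₃.1
  have hv3b : v₃ ≤ A y - 1 := hv₃.2
  have hby : 2 ≤ A y := by omega
  by_cases hp : A y + 1 ≤ v₂ + v₃
  · exact ccongr (by abel)
      (kill2 hA hadm hcub (y,v₁) x y u v₂ v₃ hv₁ hu hv₂ hv₃ hxy (by omega))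
  · have hu2 : 2 ≤ u := by
      have h2V : 2 * (v₁ + v₂ + v₃) ≤ 3 * A y := by omega
      have hmul : 2 * (v₁ + v₂ + v₃) * A x ≤ 3 * A y * A x :=
        Nat.mul_le_mul_right _ h2V
      have hb1 : 2 * (v₁ + v₂ + v₃) * A x = 2 * ((v₁ + v₂ + v₃) * A x) := by ring
      have hb2 : 3 * A y * A x = 3 * (A y * A x) := by ring
      have hb3 : A y * A x = A x * A y := by ring
      have hfin : A x * A y ≤ (2 * u) * A y := by
        have hb4 : (2 * u) * A y = 2 * (u * A y) := by ring
        linarith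
      have := Nat.le_of_mul_le_mul_right hfin (by omega : 0 < A y)
      omega
    by_cases hbv : A y ≤ v₂ + v₃
    · exact ccongr (by abel)
        (killA hA hadm hcub (y,v₁) y y x v₂ v₃ u hv₁ hv₂ hv₃ hu hu2
          (Ne.symm hxy) (Ne.symm hxy) (fun _ => hbv))
    · have hdeg' : (1 + (u - 1)) * A y + (v₁ + (v₂ + v₃)) * A x = 2 * (A x * A y) := by
        rw [show 1 + (u - 1) = u by omega, show v₁ + (v₂ + v₃) = v₁ + v₂ + v₃ by omega]
        exact hdeg
      have hS2 := S2 hA hadm hcub x y hxy hax 1 (u-1) v₁ (v₂+v₃)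
        ⟨le_refl 1, show (1:ℕ) ≤ A x - 1 by omega⟩
        ⟨show 1 ≤ u-1 by omega, show u-1 ≤ A x - 1 by omega⟩
        hv₁ ⟨show 1 ≤ v₂+v₃ by omega, show v₂+v₃ ≤ A y - 1 by omega⟩ hdeg'
      exact ccongr (by abel)
        (fuse_red hA hadm hcub (y,v₁) y x v₂ v₃ u hv₁ hv₂ hv₃ hu hu2 (Ne.symm hxy)
          (ccongr (by abel) hS2))

lemma S1 (hA : ∀ i, 1 ≤ A i) (hadm : IsAdmissible A c) (hcub : CubicValues A c)
    (x y : Fin 3) (hxy : x ≠ y) (hax : 3 ≤ A x)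
    (u v₁ v₂ v₃ : ℕ)
    (hu : ValidPt A (x,u))
    (hv₁ : ValidPt A (y,v₁)) (hv₂ : ValidPt A (y,v₂)) (hv₃ : ValidPt A (y,v₃))
    (hdeg : u * A y + (v₁ + v₂ + v₃) * A x = 2 * (A x * A y)) :
    c (Finsupp.single (x,u) 1 + (Finsupp.single (y,v₁) 1 +
      (Finsupp.single (y,v₂) 1 + Finsupp.single (y,v₃) 1))) 0 = 0 := by
  have key : ∀ w₁ w₂ w₃ : ℕ, w₁ ≤ w₂ → w₂ ≤ w₃ →
      ValidPt A (y,w₁) → ValidPt A (y,w₂) → ValidPt A (y,w₃) →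
      w₁ + w₂ + w₃ = v₁ + v₂ + v₃ →
      c (Finsupp.single (x,u) 1 + (Finsupp.single (y,w₁) 1 +
        (Finsupp.single (y,w₂) 1 + Finsupp.single (y,w₃) 1))) 0 = 0 := by
    intro w₁ w₂ w₃ a b c1 c2 c3 hsum
    exact S1sorted hA hadm hcub x y hxy hax u w₁ w₂ w₃ a b hu c1 c2 c3
      (by rw [hsum]; exact hdeg)
  rcases le_total v₁ v₂ with h12 | h12 <;> rcases le_total v₁ v₃ with h13 | h13 <;>
    rcases le_total v₂ v₃ with h23 | h23
  · exact ccongr (by abel) (key v₁ v₂ v₃ h12 h23 hv₁ hv₂ hv₃ (by omega))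
  · exact ccongr (by abel) (key v₁ v₃ v₂ h13 h23 hv₁ hv₃ hv₂ (by omega))
  · exact ccongr (by abel) (key v₃ v₁ v₂ h13 h12 hv₃ hv₁ hv₂ (by omega))
  · exact ccongr (by abel) (key v₃ v₁ v₂ h13 h12 hv₃ hv₁ hv₂ (by omega))
  · exact ccongr (by abel) (key v₂ v₁ v₃ h12 h13 hv₂ hv₁ hv₃ (by omega))
  · exact ccongr (by abel) (key v₂ v₁ v₃ h12 h13 hv₂ hv₁ hv₃ (by omega))
  · exact ccongr (by abel) (key v₂ v₃ v₁ h23 h13 hv₂ hv₃ hv₁ (by omega))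
  · exact ccongr (by abel) (key v₃ v₂ v₁ h23 h12 hv₃ hv₂ hv₁ (by omega))

end Aux12
section Aux13

variable {A : Fin 3 → ℕ} {c : Expv → ℕ → ℂ}

lemma G3 (hA : ∀ i, 1 ≤ A i) (hadm : IsAdmissible A c) (hcub : CubicValues A c)
    (x y z g4 : Fin 3) (hxy : x ≠ y) (hxz : x ≠ z) (hyz : y ≠ z)
    (n₁ n₂ n₃ n₄ : ℕ)
    (h1 : ValidPt A (x,n₁)) (h2 : ValidPt A (y,n₂)) (h3 : ValidPt A (z,n₃))
    (h4 : ValidPt A (g4,n₄))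
    (hsome : 2 ≤ n₁ ∨ 2 ≤ n₂ ∨ 2 ≤ n₃ ∨ 2 ≤ n₄) :
    c (Finsupp.single (x,n₁) 1 + (Finsupp.single (y,n₂) 1 +
      (Finsupp.single (z,n₃) 1 + Finsupp.single (g4,n₄) 1))) 0 = 0 := by
  rcases hsome with hn | hn | hn | hn
  · exact ccongr (by abel)
      (killA hA hadm hcub (g4,n₄) y z x n₂ n₃ n₁ h4 h2 h3 h1 hn
        (Ne.symm hxy) (Ne.symm hxz) (fun h => absurd h hyz))
  · exact ccongr (by abel)
      (killA hA hadm hcub (g4,n₄) x z y n₁ n₃ n₂ h4 h1 h3 h2 hn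
        hxy (Ne.symm hyz) (fun h => absurd h hxz))
  · exact ccongr (by abel)
      (killA hA hadm hcub (g4,n₄) x y z n₁ n₂ n₃ h4 h1 h2 h3 hn
        hxz hyz (fun h => absurd h hxy))
  · have hg : g4 = x ∨ g4 = y ∨ g4 = z := by
      have : ∀ a b c' d : Fin 3, a ≠ b → a ≠ c' → b ≠ c' → (d = a ∨ d = b ∨ d = c') := by
        decide
      exact this x y z g4 hxy hxz hyz
    rcases hg with rfl | rfl | rfl
    · exact ccongr (by abel)
        (killA hA hadm hcub (g4,n₁) y z g4 n₂ n₃ n₄ h1 h2 h3 h4 hn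
          (Ne.symm hxy) (Ne.symm hxz) (fun h => absurd h hyz))
    · exact ccongr (by abel)
        (killA hA hadm hcub (g4,n₂) x z g4 n₁ n₃ n₄ h2 h1 h3 h4 hn
          hxy (Ne.symm hyz) (fun h => absurd h hxz))
    · exact ccongr (by abel)
        (killA hA hadm hcub (g4,n₃) x y g4 n₁ n₂ n₄ h3 h1 h2 h4 hn
          hxz hyz (fun h => absurd h hxy))

end Aux13
section Aux14

variable {A : Fin 3 → ℕ} {c : Expv → ℕ → ℂ}

lemma deg_add (α β : Expv) : deg A (α + β) = deg A α + deg A β := by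
  classical
  unfold deg
  rw [Finsupp.sum_add_index']
  · intro p; simp
  · intro p n m; push_cast; ring

lemma deg_single (g : Fin 3) (n : ℕ) :
    deg A (Finsupp.single (g,n) 1) = ((A g : ℚ) - n) / A g := by
  classical
  unfold deg
  rw [Finsupp.sum_single_index (by simp)]
  simp

lemma fge2 (n : ℕ) (h : 2 ≤ n) : (1:ℚ)/2 ≤ ((n:ℚ) - 1)/n := by
  have h' : (2:ℚ) ≤ n := by exact_mod_cast h
  rw [div_le_div_iff₀ (by norm_num) (by linarith)]
  linarith

lemma fge3 (n : ℕ) (h : 3 ≤ n) : (2:ℚ)/3 ≤ ((n:ℚ) - 1)/n := by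
  have h' : (3:ℚ) ≤ n := by exact_mod_cast h
  rw [div_le_div_iff₀ (by norm_num) (by linarith)]
  linarith

end Aux14
/-- Lemma 3.5 (weak separation in length 4). -/
theorem weak_separation_length_four (A : Fin 3 → ℕ) (hA : ∀ i, 1 ≤ A i) (hA01 : A 0 ≤ A 1) (hA12 : A 1 ≤ A 2)
    (c : Expv → ℕ → ℂ) (hadm : IsAdmissible A c) (hcub : CubicValues A c)
    (γ : Expv) (hγ : Valid A γ) (hlen : len γ = 4)
    (i₁ i₂ : Fin 3) (j₁ j₂ : ℕ) (hne : i₁ ≠ i₂)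
    (hv₁ : ValidPt A (i₁, j₁)) (hv₂ : ValidPt A (i₂, j₂))
    (hle : e i₁ j₁ + e i₂ j₂ ≤ γ) (ha : 3 ≤ A i₁) :
    c γ 0 = 0 := by
  classical
  by_cases hdeg2 : deg A γ = 2
  swap
  · by_contra hc0
    apply hdeg2
    have := hadm.homog γ hγ 0 hc0
    simpa using this
  have hle' : Finsupp.single (i₁,j₁) 1 + Finsupp.single (i₂,j₂) 1 ≤ γ := hle
  obtain ⟨P₃, P₄, hγ4⟩ := decomp4 hlen hle'
  obtain ⟨g₃, k₃⟩ := P₃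
  obtain ⟨g₄, k₄⟩ := P₄
  have hv₃ : ValidPt A (g₃,k₃) := validPt_of_le hγ (by
    intro q; rw [hγ4]; simp only [Finsupp.add_apply]; omega)
  have hv₄ : ValidPt A (g₄,k₄) := validPt_of_le hγ (by
    intro q; rw [hγ4]; simp only [Finsupp.add_apply]; omega)
  have hj1a : 1 ≤ j₁ := hv₁.1
  have hj1b : j₁ ≤ A i₁ - 1 := hv₁.2
  have hj2a : 1 ≤ j₂ := hv₂.1
  have hj2b : j₂ ≤ A i₂ - 1 := hv₂.2
  have hk3a : 1 ≤ k₃ := hv₃.1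
  have hk3b : k₃ ≤ A g₃ - 1 := hv₃.2
  have hk4a : 1 ≤ k₄ := hv₄.1
  have hk4b : k₄ ≤ A g₄ - 1 := hv₄.2
  rw [hγ4] at hdeg2
  rw [deg_add, deg_add, deg_add, deg_single, deg_single, deg_single, deg_single] at hdeg2
  have hb2 : 2 ≤ A i₂ := by omega
  have hb3 : 2 ≤ A g₃ := by omega
  have hb4 : 2 ≤ A g₄ := by omega
  have hne1 : (A i₁ : ℚ) ≠ 0 := Nat.cast_ne_zero.mpr (by omega)
  have hne2 : (A i₂ : ℚ) ≠ 0 := Nat.cast_ne_zero.mpr (by omega)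
  have hne3 : (A g₃ : ℚ) ≠ 0 := Nat.cast_ne_zero.mpr (by omega)
  have hne4 : (A g₄ : ℚ) ≠ 0 := Nat.cast_ne_zero.mpr (by omega)
  have hsome : 2 ≤ j₁ ∨ 2 ≤ j₂ ∨ 2 ≤ k₃ ∨ 2 ≤ k₄ := by
    by_contra hno
    push_neg at hno
    obtain ⟨ha1, ha2, ha3, ha4⟩ := hno
    have e1 : j₁ = 1 := by omega
    have e2 : j₂ = 1 := by omega
    have e3 : k₃ = 1 := by omega
    have e4 : k₄ = 1 := by omega
    subst e1; subst e2; subst e3; subst e4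
    push_cast at hdeg2
    have b1 := fge3 (A i₁) ha
    have b2 := fge2 (A i₂) hb2
    have b3 := fge2 (A g₃) hb3
    have b4 := fge2 (A g₄) hb4
    linarith
  rw [hγ4]
  by_cases h3m : g₃ = i₁ ∨ g₃ = i₂
  · by_cases h4m : g₄ = i₁ ∨ g₄ = i₂
    · rcases h3m with h3 | h3
      · obtain rfl := h3.symm
        rcases h4m with h4 | h4
        · obtain rfl := h4.symm
          have hdq := hdeg2
          field_simp at hdq
          have hsc : ((A i₁:ℚ) * (A i₁:ℚ)) * (((j₁:ℚ) + k₃ + k₄) * (A i₂:ℚ) + (j₂:ℚ) * (A i₁:ℚ))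
              = ((A i₁:ℚ) * (A i₁:ℚ)) * (2 * ((A i₁:ℚ) * (A i₂:ℚ))) := by
            linear_combination (-((A i₁:ℚ) * (A i₁:ℚ))) * hdq
          have tQ := mul_left_cancel₀ (mul_ne_zero hne1 hne1) hsc
          have hdegN : (j₁ + k₃ + k₄) * A i₂ + j₂ * A i₁ = 2 * (A i₁ * A i₂) := by
            qify
            linear_combination tQ
          exact ccongr (by abel)
            (S3 hA hadm hcub i₁ i₂ hne ha j₁ k₃ k₄ j₂ hv₁ hv₃ hv₄ hv₂ hdegN)
        · obtain rfl := h4.symm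
          have hdq := hdeg2
          field_simp at hdq
          have hsc : ((A i₁:ℚ) * (A i₂:ℚ)) * (((j₁:ℚ) + k₃) * (A i₂:ℚ) + ((j₂:ℚ) + k₄) * (A i₁:ℚ))
              = ((A i₁:ℚ) * (A i₂:ℚ)) * (2 * ((A i₁:ℚ) * (A i₂:ℚ))) := by
            linear_combination (-((A i₁:ℚ) * (A i₂:ℚ))) * hdq
          have tQ := mul_left_cancel₀ (mul_ne_zero hne1 hne2) hsc
          have hdegN : (j₁ + k₃) * A i₂ + (j₂ + k₄) * A i₁ = 2 * (A i₁ * A i₂) := by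
            qify
            linear_combination tQ
          exact ccongr (by abel)
            (S2 hA hadm hcub i₁ i₂ hne ha j₁ k₃ j₂ k₄ hv₁ hv₃ hv₂ hv₄ hdegN)
      · obtain rfl := h3.symm
        rcases h4m with h4 | h4
        · obtain rfl := h4.symm
          have hdq := hdeg2
          field_simp at hdq
          have hsc : ((A i₁:ℚ) * (A i₂:ℚ)) * (((j₁:ℚ) + k₄) * (A i₂:ℚ) + ((j₂:ℚ) + k₃) * (A i₁:ℚ))
              = ((A i₁:ℚ) * (A i₂:ℚ)) * (2 * ((A i₁:ℚ) * (A i₂:ℚ))) := by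
            linear_combination (-((A i₁:ℚ) * (A i₂:ℚ))) * hdq
          have tQ := mul_left_cancel₀ (mul_ne_zero hne1 hne2) hsc
          have hdegN : (j₁ + k₄) * A i₂ + (j₂ + k₃) * A i₁ = 2 * (A i₁ * A i₂) := by
            qify
            linear_combination tQ
          exact ccongr (by abel)
            (S2 hA hadm hcub i₁ i₂ hne ha j₁ k₄ j₂ k₃ hv₁ hv₄ hv₂ hv₃ hdegN)
        · obtain rfl := h4.symm
          have hdq := hdeg2
          field_simp at hdq
          have hsc : ((A i₂:ℚ) * (A i₂:ℚ)) * ((j₁:ℚ) * (A i₂:ℚ) + ((j₂:ℚ) + k₃ + k₄) * (A i₁:ℚ))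
              = ((A i₂:ℚ) * (A i₂:ℚ)) * (2 * ((A i₁:ℚ) * (A i₂:ℚ))) := by
            linear_combination (-((A i₂:ℚ) * (A i₂:ℚ))) * hdq
          have tQ := mul_left_cancel₀ (mul_ne_zero hne2 hne2) hsc
          have hdegN : j₁ * A i₂ + (j₂ + k₃ + k₄) * A i₁ = 2 * (A i₁ * A i₂) := by
            qify
            linear_combination tQ
          exact ccongr (by abel)
            (S1 hA hadm hcub i₁ i₂ hne ha j₁ j₂ k₃ k₄ hv₁ hv₂ hv₃ hv₄ hdegN)
    · push_neg at h4m
      exact ccongr (by abel)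
        (G3 hA hadm hcub i₁ i₂ g₄ g₃ hne (Ne.symm h4m.1) (Ne.symm h4m.2)
          j₁ j₂ k₄ k₃ hv₁ hv₂ hv₄ hv₃ (by tauto))
  · push_neg at h3m
    exact ccongr (by abel)
      (G3 hA hadm hcub i₁ i₂ g₃ g₄ hne (Ne.symm h3m.1) (Ne.symm h3m.2)
        j₁ j₂ k₃ k₄ hv₁ hv₂ hv₃ hv₄ (by tauto))

end FrobeniusUniqueness
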